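/- If F is monotone and hemicontinuous on a closed convex set M, then u ∈ M satisfies ⟨Fu - f, v - u⟩ ≥ 0 for all v ∈ M if and only if u satisfies the Minty formulation ⟨Fv - f, v - u⟩ ≥ 0 for all v ∈ M. -/

import Mathlib

open RealInnerProductSpace

theorem stmt_2 {H : Type*} [NormedAddCommGroup H] [InnerProductSpace ℝ H]
    (M : Set H) (hM : IsClosed M) (hMc : Convex ℝ M)
    (F : H → H)
    (hmono : ∀ u ∈ M, ∀ v ∈ M, ⟪F u - F v, u - v⟫ ≥ 0)
    (hhemi : ∀ u ∈ M, ∀ w ∈ M, ∀ h : H,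
      ContinuousOn (fun t : ℝ => ⟪F (u + t • (w - u)), h⟫) (Set.Icc 0 1))
    (f : H) (u : H) (hu : u ∈ M) :
    (∀ v ∈ M, ⟪F u - f, v - u⟫ ≥ 0) ↔ (∀ v ∈ M, ⟪F v - f, v - u⟫ ≥ 0) := by
  constructor
  · intro h v hv
    have h1 := hmono v hv u hu
    have h2 := h v hv
    have : ⟪F v - f, v - u⟫ = ⟪F v - F u, v - u⟫ + ⟪F u - f, v - u⟫ := by
      rw [← inner_add_left]; congr 1; abel
    rw [this]
    have h1' : ⟪F v - F u, v - u⟫ ≥ 0 := h1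
    linarith
  · intro h v hv
    -- consider w t = u + t • (v - u)
    set g : ℝ → ℝ := fun t => ⟪F (u + t • (v - u)), v - u⟫ with hg
    have hgc : ContinuousOn g (Set.Icc 0 1) := hhemi u hu v hv (v - u)
    have hmem : ∀ t ∈ Set.Icc (0:ℝ) 1, u + t • (v - u) ∈ M := by
      intro t ht
      have hm := hMc hu hv (by linarith [ht.2] : (0:ℝ) ≤ 1 - t) ht.1 (by ring)
      have heq : (1 - t) • u + t • v = u + t • (v - u) := by
        rw [sub_smul, smul_sub, one_smul]; abel
      rwa [heq] at hm
    have key : ∀ t ∈ Set.Ioc (0:ℝ) 1, g t ≥ ⟪f, v - u⟫ := by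
      intro t ht
      have hwM := hmem t ⟨le_of_lt ht.1, ht.2⟩
      have := h (u + t • (v - u)) hwM
      have hdiff : (u + t • (v - u)) - u = t • (v - u) := by abel
      rw [hdiff] at this
      have : ⟪F (u + t • (v - u)) - f, t • (v - u)⟫ ≥ 0 := this
      rw [inner_sub_left, real_inner_smul_right, real_inner_smul_right] at this
      have ht' : (0:ℝ) < t := ht.1
      have h2 : t * ⟪f, v - u⟫ ≤ t * ⟪F (u + t • (v - u)), v - u⟫ := by linarith
      exact (mul_le_mul_iff_right₀ ht').mp h2
    -- take the limit t → 0⁺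
    have hne : (nhdsWithin (0:ℝ) (Set.Ioc 0 1)).NeBot := by
      rw [← mem_closure_iff_nhdsWithin_neBot, closure_Ioc (by norm_num : (0:ℝ) ≠ 1)]
      exact ⟨le_refl 0, by norm_num⟩
    have htend : Filter.Tendsto g (nhdsWithin 0 (Set.Ioc 0 1)) (nhds (g 0)) := by
      have h0 : ContinuousWithinAt g (Set.Icc 0 1) 0 :=
        hgc 0 ⟨le_refl 0, by norm_num⟩
      exact h0.mono Set.Ioc_subset_Icc_self
    have hlim : g 0 ≥ ⟪f, v - u⟫ := by
      refine ge_of_tendsto htend ?_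
      filter_upwards [self_mem_nhdsWithin] with t ht using key t ht
    have : g 0 = ⟪F u, v - u⟫ := by simp [hg]
    rw [this] at hlim
    rw [inner_sub_left]
    linarith
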